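/- arXiv:1811.04316 — 2 statements merged into one kernel-verified Lean document; each statement's English description precedes it below -/
import Mathlib

section
/- A Morse function f on an n-dimensional Riemannian manifold X that is strictly mean curvature convex (i.e. mn.curv_x(f) > 0 at every non-critical point x) has all its critical points of Morse index at most n − 2. Equivalently: at a nondegenerate critical point of f, the Hessian of f cannot be negative definite on any (n−1)-dimensional subspace if nearby level sets have positive mean curvature toward the downstream gradient direction; concretely, prove the linear-algebra core: if a nondegenerate critical point had index ≥ n−1, then small level hypersurfaces near it would have nonpositive mean curvature with respect to the downstream normal, contradicting strict mean curvature convexity. -/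
/-- Mean curvature of level hypersurfaces of `f` (divergence of the normalized
gradient; convex boundaries get positive mean curvature, and the coorientation
is by the downstream gradient `-∇f/‖∇f‖`). -/
noncomputable def meanCurv {F : Type*} [NormedAddCommGroup F] [InnerProductSpace ℝ F]
    [FiniteDimensional ℝ F] (f : F → ℝ) (x : F) : ℝ :=
  ∑ i, inner ℝ (fderiv ℝ (fun y => ‖gradient f y‖⁻¹ • gradient f y) x (stdOrthonormalBasis ℝ F i)) (stdOrthonormalBasis ℝ F i)


open scoped RealInnerProductSpace

section aux0

variable {E : Type*} [NormedAddCommGroup E] [InnerProductSpace ℝ E] [FiniteDimensional ℝ E]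

omit [FiniteDimensional ℝ E] in
lemma hasFDerivAt_normalized (g : E → E) (x : E) (B : E →L[ℝ] E)
    (hB : HasFDerivAt g B x) (hx : g x ≠ 0) :
    HasFDerivAt (fun y => ‖g y‖⁻¹ • g y)
      (‖g x‖⁻¹ • B + ((-(2 * ‖g x‖ ^ 3)⁻¹) • ((2:ℕ) • (innerSL ℝ (g x)).comp B)).smulRight (g x)) x := by
  have hq : HasFDerivAt (fun y => ‖g y‖ ^ 2) ((2:ℕ) • (innerSL ℝ (g x)).comp B) x := hB.norm_sq
  have hgx2 : (‖g x‖ ^ 2 : ℝ) ≠ 0 := pow_ne_zero 2 (norm_ne_zero_iff.mpr hx)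
  have hsq : HasDerivAt (fun t : ℝ => (Real.sqrt t)⁻¹) (-(2 * ‖g x‖ ^ 3)⁻¹) (‖g x‖ ^ 2) := by
    have h1 : HasDerivAt Real.sqrt (1 / (2 * Real.sqrt (‖g x‖ ^ 2))) (‖g x‖ ^ 2) :=
      Real.hasDerivAt_sqrt hgx2
    have h2 := h1.inv (by
      rw [Real.sqrt_sq (norm_nonneg _)]; exact norm_ne_zero_iff.mpr hx)
    refine h2.congr_deriv ?_
    rw [Real.sqrt_sq (norm_nonneg _)]
    field_simp
  have hfun : (fun y => ‖g y‖⁻¹) = (fun t : ℝ => (Real.sqrt t)⁻¹) ∘ fun y => ‖g y‖ ^ 2 := by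
    funext y; simp [Function.comp, Real.sqrt_sq (norm_nonneg _)]
  have hφ : HasFDerivAt (fun y => ‖g y‖⁻¹)
      ((-(2 * ‖g x‖ ^ 3)⁻¹) • ((2:ℕ) • (innerSL ℝ (g x)).comp B)) x := by
    rw [hfun]; exact hsq.comp_hasFDerivAt x hq
  exact hφ.smul hB

lemma trace_formula (g : E → E) (x : E) (B : E →L[ℝ] E)
    (hB : HasFDerivAt g B x) (hx : g x ≠ 0)
    (hsym : ∀ u w : E, ⟪B u, w⟫ = ⟪B w, u⟫) :
    ∑ i, ⟪fderiv ℝ (fun y => ‖g y‖⁻¹ • g y) x (stdOrthonormalBasis ℝ E i),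
        stdOrthonormalBasis ℝ E i⟫
      = ‖g x‖⁻¹ * ((∑ i, ⟪B (stdOrthonormalBasis ℝ E i), stdOrthonormalBasis ℝ E i⟫)
          - ⟪B (‖g x‖⁻¹ • g x), ‖g x‖⁻¹ • g x⟫) := by
  have hD := (hasFDerivAt_normalized g x B hB hx).fderiv
  rw [hD]
  set e := stdOrthonormalBasis ℝ E with he
  have hterm : ∀ i, ⟪(‖g x‖⁻¹ • B + ((-(2 * ‖g x‖ ^ 3)⁻¹) •
        ((2:ℕ) • (innerSL ℝ (g x)).comp B)).smulRight (g x)) (e i), e i⟫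
      = ‖g x‖⁻¹ * ⟪B (e i), e i⟫
        + (-(‖g x‖ ^ 3)⁻¹ * ⟪B (g x), e i⟫) * ⟪g x, e i⟫ := by
    intro i
    rw [ContinuousLinearMap.add_apply, ContinuousLinearMap.smulRight_apply,
      ContinuousLinearMap.smul_apply, inner_add_left, real_inner_smul_left,
      real_inner_smul_left]
    congr 1
    rw [ContinuousLinearMap.smul_apply, ContinuousLinearMap.smul_apply,
      ContinuousLinearMap.comp_apply, innerSL_apply_apply]
    have : ⟪g x, B (e i)⟫ = ⟪B (g x), e i⟫ := by
      rw [real_inner_comm]; exact hsym (e i) (g x)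
    rw [this]
    simp only [smul_eq_mul, nsmul_eq_mul]
    ring
  rw [Finset.sum_congr rfl (fun i _ => hterm i), Finset.sum_add_distrib, ← Finset.mul_sum]
  have hsum2 : ∑ i, (-(‖g x‖ ^ 3)⁻¹ * ⟪B (g x), e i⟫) * ⟪g x, e i⟫
      = -(‖g x‖ ^ 3)⁻¹ * ⟪B (g x), g x⟫ := by
    have := e.sum_inner_mul_inner (B (g x)) (g x)
    calc ∑ i, (-(‖g x‖ ^ 3)⁻¹ * ⟪B (g x), e i⟫) * ⟪g x, e i⟫
        = -(‖g x‖ ^ 3)⁻¹ * ∑ i, ⟪B (g x), e i⟫ * ⟪e i, g x⟫ := by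
          rw [Finset.mul_sum]; congr 1; funext i; rw [real_inner_comm (g x) (e i)]; ring
      _ = -(‖g x‖ ^ 3)⁻¹ * ⟪B (g x), g x⟫ := by rw [this]
  rw [hsum2, map_smul, real_inner_smul_left, real_inner_smul_right]
  have hnorm : (‖g x‖ : ℝ) ≠ 0 := norm_ne_zero_iff.mpr hx
  field_simp
  ring

end aux0

section aux

variable {E : Type*} [NormedAddCommGroup E] [InnerProductSpace ℝ E] [FiniteDimensional ℝ E]

/-- The inverse of `InnerProductSpace.toDual` as a real continuous linear map. -/
noncomputable def dualIsoCLM (E : Type*) [NormedAddCommGroup E] [InnerProductSpace ℝ E]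
    [FiniteDimensional ℝ E] : StrongDual ℝ E →L[ℝ] E :=
  LinearMap.toContinuousLinearMap
    ({ toFun := fun φ => (InnerProductSpace.toDual ℝ E).symm φ
       map_add' := fun a b => by simp
       map_smul' := fun c a => by simp } : StrongDual ℝ E →ₗ[ℝ] E)

@[simp] lemma dualIsoCLM_apply (φ : StrongDual ℝ E) :
    dualIsoCLM E φ = (InnerProductSpace.toDual ℝ E).symm φ := rfl

@[simp] lemma inner_dualIsoCLM (φ : StrongDual ℝ E) (w : E) :
    ⟪dualIsoCLM E φ, w⟫ = φ w := InnerProductSpace.toDual_symm_apply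

end aux

section aux2

variable {E : Type*} [NormedAddCommGroup E] [InnerProductSpace ℝ E] [FiniteDimensional ℝ E]

/-- Analytic core: passing to the limit along an eigendirection of the Hessian at a
critical point of a strictly mean curvature convex function. -/
lemma key_limit (f : E → ℝ) (hf : ContDiff ℝ 2 f)
    (ε : E → ℝ) (hε : Continuous ε)
    (hmc : ∀ x, gradient f x ≠ 0 → ε x ≤ meanCurv f x)
    (x₀ : E) (hcrit : gradient f x₀ = 0)
    (B : E → (E →L[ℝ] E)) (hB : ∀ y, HasFDerivAt (gradient f) (B y) y)
    (hBcont : Continuous B)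
    (hsymB : ∀ y u w, ⟪B y u, w⟫ = ⟪B y w, u⟫)
    (e : E) (μ : ℝ) (hμ : μ ≠ 0) (he : ‖e‖ = 1) (hAe : B x₀ e = μ • e) :
    0 ≤ (∑ i, ⟪B x₀ (stdOrthonormalBasis ℝ E i), stdOrthonormalBasis ℝ E i⟫) - μ := by
  classical
  set A := B x₀ with hA
  set γ : ℝ → E := fun t => x₀ + t • e with hγ
  have hγ00 : γ 0 = x₀ := by simp [hγ]
  have hγcont : Continuous γ := by fun_prop
  have hγ0 : Filter.Tendsto γ (nhdsWithin 0 (Set.Ioi (0:ℝ))) (nhds x₀) := by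
    have := (hγcont.tendsto 0).mono_left
      (nhdsWithin_le_nhds : nhdsWithin (0:ℝ) (Set.Ioi 0) ≤ nhds 0)
    rwa [hγ00] at this
  have hgc : Continuous (gradient f) :=
    continuous_iff_continuousAt.mpr fun y => ((hB y).differentiableAt).continuousAt
  -- slope convergence
  have hslope : Filter.Tendsto (fun t : ℝ => t⁻¹ • gradient f (γ t))
      (nhdsWithin 0 (Set.Ioi (0:ℝ))) (nhds (A e)) := by
    have hc : HasDerivAt γ e 0 := by
      have h1 : HasDerivAt (fun t : ℝ => t • e) ((1:ℝ) • e) 0 := (hasDerivAt_id 0).smul_const e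
      simpa [hγ] using h1.const_add x₀
    have hcomp : HasDerivAt (fun t => gradient f (γ t)) (A e) 0 := by
      have hB0 : HasFDerivAt (gradient f) A (γ 0) := by rw [hγ00]; exact hB x₀
      exact hB0.comp_hasDerivAt 0 hc
    have h3 := hasDerivAt_iff_tendsto_slope.mp hcomp
    have heq : ∀ t : ℝ, slope (fun t => gradient f (γ t)) 0 t = t⁻¹ • gradient f (γ t) := by
      intro t
      rw [slope_def_module]
      simp [hγ00, hcrit]
    exact Filter.Tendsto.congr heq
      (h3.mono_left (nhdsWithin_mono 0 (fun t ht => ne_of_gt ht)))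
  have hAene : A e ≠ 0 := by
    rw [hAe]
    exact smul_ne_zero hμ (by intro h; rw [h] at he; simp at he)
  have hne : ∀ᶠ t in nhdsWithin 0 (Set.Ioi (0:ℝ)), gradient f (γ t) ≠ 0 := by
    filter_upwards [hslope.eventually_ne hAene] with t ht hzero
    exact ht (by rw [hzero, smul_zero])
  -- convergence of the unit normal
  set N : ℝ → E := fun t => ‖gradient f (γ t)‖⁻¹ • gradient f (γ t) with hN
  have hNlim : Filter.Tendsto N (nhdsWithin 0 (Set.Ioi (0:ℝ)))
      (nhds (‖A e‖⁻¹ • A e)) := by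
    have hcont : ContinuousAt (fun v : E => ‖v‖⁻¹ • v) (A e) :=
      ((continuous_norm.continuousAt).inv₀ (norm_ne_zero_iff.mpr hAene)).smul continuousAt_id
    have h1 := hcont.tendsto.comp hslope
    refine Filter.Tendsto.congr' ?_ h1
    filter_upwards [self_mem_nhdsWithin] with t ht
    have ht0 : (0:ℝ) < t := ht
    show ‖t⁻¹ • gradient f (γ t)‖⁻¹ • (t⁻¹ • gradient f (γ t)) = N t
    have ht' : t ≠ 0 := ne_of_gt ht0
    rw [hN, norm_smul, Real.norm_eq_abs, abs_of_pos (inv_pos.mpr ht0), mul_inv, inv_inv,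
      smul_smul]
    congr 1
    rw [mul_comm t _, mul_assoc, mul_inv_cancel₀ ht', mul_one]
  have hBt : Filter.Tendsto (fun t => B (γ t)) (nhdsWithin 0 (Set.Ioi (0:ℝ))) (nhds A) :=
    (hBcont.continuousAt.tendsto).comp hγ0
  -- convergence of the trace term
  have hterm1 : Filter.Tendsto
      (fun t => ∑ i, ⟪B (γ t) (stdOrthonormalBasis ℝ E i), stdOrthonormalBasis ℝ E i⟫)
      (nhdsWithin 0 (Set.Ioi (0:ℝ)))
      (nhds (∑ i, ⟪A (stdOrthonormalBasis ℝ E i), stdOrthonormalBasis ℝ E i⟫)) := by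
    refine tendsto_finset_sum _ (fun i _ => ?_)
    have happly : Filter.Tendsto (fun t => B (γ t) (stdOrthonormalBasis ℝ E i))
        (nhdsWithin 0 (Set.Ioi (0:ℝ))) (nhds (A (stdOrthonormalBasis ℝ E i))) :=
      ((ContinuousLinearMap.apply ℝ E (stdOrthonormalBasis ℝ E i)).continuous.tendsto A).comp hBt
    exact happly.inner tendsto_const_nhds
  -- convergence of the normal-normal term
  have hterm2 : Filter.Tendsto (fun t => ⟪B (γ t) (N t), N t⟫)
      (nhdsWithin 0 (Set.Ioi (0:ℝ))) (nhds ⟪A (‖A e‖⁻¹ • A e), ‖A e‖⁻¹ • A e⟫) := by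
    have happ : Filter.Tendsto (fun t => B (γ t) (N t)) (nhdsWithin 0 (Set.Ioi (0:ℝ)))
        (nhds (A (‖A e‖⁻¹ • A e))) := by
      have hcont := (isBoundedBilinearMap_apply (𝕜 := ℝ) (E := E) (F := E)).continuous
      exact (hcont.tendsto (A, ‖A e‖⁻¹ • A e)).comp (hBt.prodMk_nhds hNlim)
    exact happ.inner hNlim
  -- value of the limit of the normal-normal term
  have hval : ⟪A (‖A e‖⁻¹ • A e), ‖A e‖⁻¹ • A e⟫ = μ := by
    have hnAe : ‖A e‖ = |μ| := by rw [hAe, norm_smul, Real.norm_eq_abs, he, mul_one]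
    rw [hnAe, hAe, smul_smul, map_smul, real_inner_smul_left, real_inner_smul_right, hAe,
      real_inner_smul_left, real_inner_self_eq_norm_mul_norm, he]
    have habs : |μ| ≠ 0 := abs_ne_zero.mpr hμ
    have habs2 : |μ| * |μ| = μ * μ := abs_mul_abs_self μ
    field_simp
    rw [sq_abs]
  -- the left-hand side tends to zero
  have hlhs : Filter.Tendsto (fun t => ε (γ t) * ‖gradient f (γ t)‖)
      (nhdsWithin 0 (Set.Ioi (0:ℝ))) (nhds 0) := by
    have h1 : Filter.Tendsto (fun t => gradient f (γ t)) (nhdsWithin 0 (Set.Ioi (0:ℝ)))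
        (nhds 0) := by
      have := (hgc.continuousAt.tendsto).comp hγ0
      rwa [hcrit] at this
    have h2 : Filter.Tendsto (fun t => ‖gradient f (γ t)‖) (nhdsWithin 0 (Set.Ioi (0:ℝ)))
        (nhds 0) := by simpa using h1.norm
    have h3 : Filter.Tendsto (fun t => ε (γ t)) (nhdsWithin 0 (Set.Ioi (0:ℝ)))
        (nhds (ε x₀)) := (hε.continuousAt.tendsto).comp hγ0
    simpa using h3.mul h2
  -- the eventual inequality
  have hineq : ∀ᶠ t in nhdsWithin 0 (Set.Ioi (0:ℝ)),
      ε (γ t) * ‖gradient f (γ t)‖ ≤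
        (∑ i, ⟪B (γ t) (stdOrthonormalBasis ℝ E i), stdOrthonormalBasis ℝ E i⟫)
          - ⟪B (γ t) (N t), N t⟫ := by
    filter_upwards [hne] with t hgt
    have hmct := hmc (γ t) hgt
    have hTF := trace_formula (gradient f) (γ t) (B (γ t)) (hB (γ t)) hgt (hsymB (γ t))
    have hmeq : meanCurv f (γ t) = ‖gradient f (γ t)‖⁻¹ *
        ((∑ i, ⟪B (γ t) (stdOrthonormalBasis ℝ E i), stdOrthonormalBasis ℝ E i⟫)
          - ⟪B (γ t) (N t), N t⟫) := hTF
    have hnormpos : (0:ℝ) < ‖gradient f (γ t)‖ := norm_pos_iff.mpr hgt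
    rw [hmeq] at hmct
    calc ε (γ t) * ‖gradient f (γ t)‖
        ≤ (‖gradient f (γ t)‖⁻¹ *
            ((∑ i, ⟪B (γ t) (stdOrthonormalBasis ℝ E i), stdOrthonormalBasis ℝ E i⟫)
              - ⟪B (γ t) (N t), N t⟫)) * ‖gradient f (γ t)‖ :=
          mul_le_mul_of_nonneg_right hmct (norm_nonneg _)
      _ = (∑ i, ⟪B (γ t) (stdOrthonormalBasis ℝ E i), stdOrthonormalBasis ℝ E i⟫)
          - ⟪B (γ t) (N t), N t⟫ := by
          field_simp
  -- conclude by passing to the limit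
  have := le_of_tendsto_of_tendsto hlhs (hterm1.sub (hval ▸ hterm2)) hineq
  simpa using this

end aux2


set_option maxHeartbeats 1000000 in
/-- linear-algebra core of "strictly mean curvature convex Morse
functions have all Morse indices ≤ n-2": if `f` is `C²`, strictly mean
curvature convex (mean curvature of level sets ≥ ε > 0 at all non-critical
points) and `x₀` is a nondegenerate critical point, then the Hessian of `f` at
`x₀` is not negative definite on any subspace of dimension ≥ n-1, i.e. every
such subspace contains a nonzero vector on which the Hessian is ≥ 0. -/
theorem stmt5 {n : ℕ} (hn : 2 ≤ n) (f : EuclideanSpace ℝ (Fin n) → ℝ)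
    (hf : ContDiff ℝ 2 f)
    (ε : EuclideanSpace ℝ (Fin n) → ℝ) (hε : Continuous ε) (hεpos : ∀ x, 0 < ε x)
    (hmc : ∀ x, gradient f x ≠ 0 → ε x ≤ meanCurv f x)
    (x₀ : EuclideanSpace ℝ (Fin n)) (hcrit : gradient f x₀ = 0)
    (hnd : ∀ v : EuclideanSpace ℝ (Fin n),
      (∀ w, iteratedFDeriv ℝ 2 f x₀ ![v, w] = 0) → v = 0) :
    ∀ W : Submodule ℝ (EuclideanSpace ℝ (Fin n)), n - 1 ≤ Module.finrank ℝ W →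
      ∃ v ∈ W, v ≠ 0 ∧ 0 ≤ iteratedFDeriv ℝ 2 f x₀ ![v, v] := by

  classical
  intro W hW
  have h2 : ContDiff ℝ 1 (fderiv ℝ f) := hf.fderiv_right (by norm_num)
  set B : EuclideanSpace ℝ (Fin n) → (EuclideanSpace ℝ (Fin n) →L[ℝ] EuclideanSpace ℝ (Fin n)) :=
    fun y => (dualIsoCLM _).comp (fderiv ℝ (fderiv ℝ f) y) with hBdef
  have hB : ∀ y, HasFDerivAt (gradient f) (B y) y := by
    intro y
    have hd : HasFDerivAt (fderiv ℝ f) (fderiv ℝ (fderiv ℝ f) y) y :=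
      ((h2.differentiable one_ne_zero) y).hasFDerivAt
    exact ((dualIsoCLM _).hasFDerivAt.comp y hd :)
  have hBcont : Continuous B := by
    have hD2 : Continuous (fderiv ℝ (fderiv ℝ f)) := h2.continuous_fderiv one_ne_zero
    exact ((ContinuousLinearMap.compL ℝ _ _ _ (dualIsoCLM _)).continuous).comp hD2
  have hBinner : ∀ y u w, ⟪B y u, w⟫ = fderiv ℝ (fderiv ℝ f) y u w := by
    intro y u w
    rw [hBdef]
    exact inner_dualIsoCLM _ _
  have hsymB : ∀ y u w, ⟪B y u, w⟫ = ⟪B y w, u⟫ := by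
    intro y u w
    rw [hBinner, hBinner]
    exact (hf.contDiffAt.isSymmSndFDerivAt (by simp)) u w
  have hIt : ∀ v w : EuclideanSpace ℝ (Fin n),
      iteratedFDeriv ℝ 2 f x₀ ![v, w] = ⟪B x₀ v, w⟫ := by
    intro v w
    rw [iteratedFDeriv_two_apply f x₀ ![v, w], hBinner]
    simp
  -- spectral decomposition of the Hessian at x₀
  set A := B x₀ with hA
  have hTsym : (A : EuclideanSpace ℝ (Fin n) →ₗ[ℝ] EuclideanSpace ℝ (Fin n)).IsSymmetric := by
    intro u w
    have := hsymB x₀ u w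
    simpa [real_inner_comm (A w) u] using this
  set b := hTsym.eigenvectorBasis finrank_euclideanSpace_fin with hb
  set μ := hTsym.eigenvalues finrank_euclideanSpace_fin with hμdef
  have hApply : ∀ i, A (b i) = μ i • b i := fun i =>
    hTsym.apply_eigenvectorBasis finrank_euclideanSpace_fin i
  by_cases hcase : ∃ i j, i ≠ j ∧ 0 ≤ μ i ∧ 0 ≤ μ j
  · -- two nonnegative eigenvalues: intersect W with the corresponding 2-plane
    obtain ⟨i, j, hij, h0i, h0j⟩ := hcase
    set P : Submodule ℝ (EuclideanSpace ℝ (Fin n)) := Submodule.span ℝ {b i, b j} with hP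
    have hinj : Function.Injective ![i, j] := by
      intro a c h
      fin_cases a <;> fin_cases c <;>
        simp only [Matrix.cons_val_zero, Matrix.cons_val_one, Matrix.head_cons] at h ⊢ <;>
        first
          | rfl
          | exact absurd h hij
          | exact absurd h.symm hij
    have hli : LinearIndependent ℝ (fun k : Fin 2 => b (![i, j] k)) :=
      (b.orthonormal.comp ![i, j] hinj).linearIndependent
    have hrange : Set.range (fun k : Fin 2 => b (![i, j] k)) = {b i, b j} := by
      ext z
      simp only [Set.mem_range, Fin.exists_fin_two, Matrix.cons_val_zero, Matrix.cons_val_one,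
        Matrix.head_cons, Set.mem_insert_iff, Set.mem_singleton_iff]
      constructor
      · rintro (h | h) <;> [left; right] <;> exact h.symm
      · rintro (h | h) <;> [left; right] <;> exact h.symm
    have hfrP : Module.finrank ℝ P = 2 := by
      rw [hP, ← hrange, finrank_span_eq_card hli]
      simp
    have hWP : W ⊓ P ≠ ⊥ := by
      intro hbot
      have hsum := Submodule.finrank_sup_add_finrank_inf_eq W P
      rw [hbot] at hsum
      have h1 : Module.finrank ℝ (W ⊔ P : Submodule ℝ (EuclideanSpace ℝ (Fin n))) ≤ n := by
        have := Submodule.finrank_le (W ⊔ P : Submodule ℝ (EuclideanSpace ℝ (Fin n)))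
        rwa [finrank_euclideanSpace_fin] at this
      rw [hfrP] at hsum
      simp [finrank_bot] at hsum
      omega
    obtain ⟨v, hvWP, hv0⟩ := Submodule.exists_mem_ne_zero_of_ne_bot hWP
    have hvW : v ∈ W := (Submodule.mem_inf.mp hvWP).1
    have hvP : v ∈ P := (Submodule.mem_inf.mp hvWP).2
    obtain ⟨c, d, hv⟩ := Submodule.mem_span_pair.mp hvP
    refine ⟨v, hvW, hv0, ?_⟩
    rw [hIt]
    have hAv : A v = (c * μ i) • b i + (d * μ j) • b j := by
      rw [← hv, map_add, map_smul, map_smul, hApply, hApply, smul_smul, smul_smul]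
    have hbij : ⟪b i, b j⟫ = 0 := b.orthonormal.2 hij
    have hbji : ⟪b j, b i⟫ = 0 := b.orthonormal.2 hij.symm
    have hbii : ⟪b i, b i⟫ = 1 := by
      rw [real_inner_self_eq_norm_mul_norm, b.orthonormal.1 i]; norm_num
    have hbjj : ⟪b j, b j⟫ = 1 := by
      rw [real_inner_self_eq_norm_mul_norm, b.orthonormal.1 j]; norm_num
    have : ⟪A v, v⟫ = c ^ 2 * μ i + d ^ 2 * μ j := by
      rw [hAv, ← hv]
      simp only [inner_add_left, inner_add_right, real_inner_smul_left, real_inner_smul_right,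
        hbij, hbji, hbii, hbjj]
      ring
    rw [this]
    have := sq_nonneg c
    have := sq_nonneg d
    positivity
  · -- at most one nonnegative eigenvalue: contradiction with mean curvature convexity
    exfalso
    push_neg at hcase
    have hnonempty : (Finset.univ : Finset (Fin n)).Nonempty := ⟨⟨0, by omega⟩, Finset.mem_univ _⟩
    obtain ⟨i₀, -, hmax⟩ := Finset.exists_max_image Finset.univ μ hnonempty
    have hneg : ∀ j, j ≠ i₀ → μ j < 0 := by
      intro j hj
      rcases lt_or_ge (μ j) 0 with h | h
      · exact h
      · have := hcase j i₀ hj h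
        have := hmax j (Finset.mem_univ j)
        linarith
    have hb1 : ‖b i₀‖ = 1 := b.orthonormal.1 i₀
    have hμ0 : μ i₀ ≠ 0 := by
      intro h0
      have hz : b i₀ = 0 := by
        refine hnd (b i₀) fun w => ?_
        rw [hIt, hApply, h0, zero_smul, inner_zero_left]
      rw [hz] at hb1
      simp at hb1
    have hkey := key_limit f hf ε hε hmc x₀ hcrit B hB hBcont hsymB (b i₀) (μ i₀) hμ0 hb1
      (hApply i₀)
    -- identify the trace with the sum of eigenvalues
    set e' := stdOrthonormalBasis ℝ (EuclideanSpace ℝ (Fin n)) with he'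
    have htr : (∑ i, ⟪A (e' i), e' i⟫) = ∑ j, μ j := by
      have step1 : ∀ i, ⟪A (e' i), e' i⟫ = ∑ j, ⟪A (b j), e' i⟫ * ⟪e' i, b j⟫ := by
        intro i
        rw [← b.sum_inner_mul_inner (A (e' i)) (e' i)]
        refine Finset.sum_congr rfl fun j _ => ?_
        rw [hsymB x₀ (e' i) (b j)]
        congr 1
        exact real_inner_comm _ _
      rw [Finset.sum_congr rfl fun i _ => step1 i, Finset.sum_comm]
      refine Finset.sum_congr rfl fun j _ => ?_
      rw [e'.sum_inner_mul_inner (A (b j)) (b j), hApply, real_inner_smul_left,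
        real_inner_self_eq_norm_mul_norm, b.orthonormal.1 j]
      norm_num
    rw [htr] at hkey
    have hsplit : ∑ j, μ j = μ i₀ + ∑ j ∈ Finset.univ.erase i₀, μ j :=
      (Finset.add_sum_erase Finset.univ μ (Finset.mem_univ i₀)).symm
    have herasene : (Finset.univ.erase i₀ : Finset (Fin n)).Nonempty := by
      obtain ⟨j, hj⟩ := Fintype.exists_ne_of_one_lt_card (by simp; omega) i₀
      exact ⟨j, Finset.mem_erase.mpr ⟨hj, Finset.mem_univ j⟩⟩
    have hlt : ∑ j ∈ Finset.univ.erase i₀, μ j < 0 :=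
      Finset.sum_neg (fun j hj => hneg j (Finset.ne_of_mem_erase hj)) herasene
    linarith
end

section
/- Let A be a symmetric bilinear form (Hessian of f) at a nondegenerate critical point of f : ℝⁿ → ℝ (with the Euclidean metric) of Morse index n (a local maximum). Then for small t < f(0), the level hypersurfaces {f = t} near 0 are spheres-like hypersurfaces whose mean curvature with respect to the downstream normal −grad f/‖grad f‖ is negative. Consequently, a strictly mean curvature convex function has no local maxima. -/
open scoped RealInnerProductSpace

section auxiliary

variable {E : Type*} [NormedAddCommGroup E] [InnerProductSpace ℝ E] [FiniteDimensional ℝ E]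

noncomputable def dualIso (E : Type*) [NormedAddCommGroup E] [InnerProductSpace ℝ E]
    [FiniteDimensional ℝ E] : (E →L[ℝ] ℝ) →L[ℝ] E :=
  LinearMap.mkContinuous
    { toFun := fun φ => (InnerProductSpace.toDual ℝ E).symm φ
      map_add' := fun φ ψ => by simp
      map_smul' := fun c φ => by simp }
    1 (fun φ => by simp)

@[simp] lemma dualIso_apply (φ : E →L[ℝ] ℝ) :
    dualIso E φ = (InnerProductSpace.toDual ℝ E).symm φ := rfl

lemma gradient_eq_dualIso (f : E → ℝ) : gradient f = fun x => dualIso E (fderiv ℝ f x) := rfl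

lemma grad_contDiff (f : E → ℝ) (hf : ContDiff ℝ 2 f) : ContDiff ℝ 1 (gradient f) := by
  rw [gradient_eq_dualIso]
  exact (dualIso E).contDiff.comp (hf.fderiv_right (m := 1) (by norm_num))

lemma inner_fderiv_grad (f : E → ℝ) (hf : ContDiff ℝ 2 f) (x v w : E) :
    ⟪fderiv ℝ (gradient f) x v, w⟫ = fderiv ℝ (fderiv ℝ f) x v w := by
  have hd : HasFDerivAt (fderiv ℝ f) (fderiv ℝ (fderiv ℝ f) x) x :=
    ((hf.fderiv_right (m := 1) (by norm_num)).differentiable one_ne_zero x).hasFDerivAt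
  have hgrad : HasFDerivAt (gradient f)
      ((dualIso E).comp (fderiv ℝ (fderiv ℝ f) x)) x :=
    (dualIso E).hasFDerivAt.comp x hd
  rw [hgrad.fderiv]
  simp [InnerProductSpace.toDual_symm_apply]

lemma phi_neg (hdim : 2 ≤ Module.finrank ℝ E) (A : E →L[ℝ] E)
    (hA : ∀ v : E, v ≠ 0 → ⟪A v, v⟫ < 0) (w : E) (hw : ‖w‖ = 1) :
    (∑ i, ⟪A (stdOrthonormalBasis ℝ E i), stdOrthonormalBasis ℝ E i⟫) - ⟪A w, w⟫ < 0 := by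
  set e := stdOrthonormalBasis ℝ E with he
  set c : Fin (Module.finrank ℝ E) → ℝ := fun i => ⟪w, e i⟫ with hc
  set v : Fin (Module.finrank ℝ E) → E := fun i => e i - c i • w with hv
  have hvsum : ∑ i, c i • v i = 0 := by
    have h1 : ∑ i, c i • e i = w := by
      rw [← e.sum_repr' w]
      exact Finset.sum_congr rfl fun i _ => by rw [hc, real_inner_comm]
    have h2 : ∑ i, c i * c i = 1 := by
      have hh := e.sum_inner_mul_inner w w
      rw [real_inner_self_eq_norm_sq, hw] at hh
      calc ∑ i, c i * c i = ∑ i, ⟪w, e i⟫ * ⟪e i, w⟫ :=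
            Finset.sum_congr rfl fun i _ => by rw [hc, real_inner_comm w (e i)]
        _ = 1 := by rw [hh]; norm_num
    calc ∑ i, c i • v i = (∑ i, c i • e i) - (∑ i, c i * c i) • w := by
          rw [Finset.sum_smul, ← Finset.sum_sub_distrib]
          exact Finset.sum_congr rfl fun i _ => by rw [hv]; simp [smul_sub, smul_smul]
      _ = 0 := by rw [h1, h2, one_smul, sub_self]
  have hexp : ∀ i, ⟪A (e i), e i⟫ =
      c i * c i * ⟪A w, w⟫ + c i * ⟪A w, v i⟫ + c i * ⟪A (v i), w⟫ + ⟪A (v i), v i⟫ := by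
    intro i
    have : e i = c i • w + v i := by rw [hv]; simp
    rw [this]
    simp [inner_add_left, inner_add_right, real_inner_smul_left, real_inner_smul_right]
    ring
  have hsum : ∑ i, ⟪A (e i), e i⟫ = ⟪A w, w⟫ + ∑ i, ⟪A (v i), v i⟫ := by
    rw [Finset.sum_congr rfl fun i _ => hexp i]
    rw [Finset.sum_add_distrib, Finset.sum_add_distrib, Finset.sum_add_distrib]
    have e1 : ∑ i, c i * c i * ⟪A w, w⟫ = ⟪A w, w⟫ := by
      rw [← Finset.sum_mul]
      have h2 : ∑ i, c i * c i = 1 := by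
        have hh := e.sum_inner_mul_inner w w
        rw [real_inner_self_eq_norm_sq, hw] at hh
        calc ∑ i, c i * c i = ∑ i, ⟪w, e i⟫ * ⟪e i, w⟫ :=
              Finset.sum_congr rfl fun i _ => by rw [hc, real_inner_comm w (e i)]
          _ = 1 := by rw [hh]; norm_num
      rw [h2, one_mul]
    have e2 : ∑ i, c i * ⟪A w, v i⟫ = 0 := by
      have : ∑ i, c i * ⟪A w, v i⟫ = ⟪A w, ∑ i, c i • v i⟫ := by
        rw [inner_sum]
        exact Finset.sum_congr rfl fun i _ => by rw [real_inner_smul_right]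
      rw [this, hvsum, inner_zero_right]
    have e3 : ∑ i, c i * ⟪A (v i), w⟫ = 0 := by
      have : ∑ i, c i * ⟪A (v i), w⟫ = ⟪A (∑ i, c i • v i), w⟫ := by
        rw [map_sum, sum_inner]
        exact Finset.sum_congr rfl fun i _ => by rw [map_smul, real_inner_smul_left]
      rw [this, hvsum, map_zero, inner_zero_left]
    rw [e1, e2, e3]; ring
  rw [hsum]
  have hnonpos : ∀ i ∈ Finset.univ, ⟪A (v i), v i⟫ ≤ (fun _ => (0:ℝ)) i := by
    intro i _
    rcases eq_or_ne (v i) 0 with h | h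
    · simp [h]
    · exact le_of_lt (hA _ h)
  have hex : ∃ i, v i ≠ 0 := by
    by_contra h
    push_neg at h
    have he' : ∀ i, e i = c i • w := by
      intro i
      have hi := h i
      rw [hv] at hi
      exact sub_eq_zero.mp hi
    have h0 : (0 : ℕ) < Module.finrank ℝ E := by omega
    have h1 : (1 : ℕ) < Module.finrank ℝ E := by omega
    set i0 : Fin (Module.finrank ℝ E) := ⟨0, h0⟩
    set i1 : Fin (Module.finrank ℝ E) := ⟨1, h1⟩
    have hne : i0 ≠ i1 := by simp [i0, i1, Fin.ext_iff]
    have horth : ⟪e i0, e i1⟫ = 0 := e.orthonormal.2 hne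
    have hcne : ∀ i, c i ≠ 0 := by
      intro i hci
      have : ‖e i‖ = 1 := e.orthonormal.1 i
      rw [he' i, hci, zero_smul, norm_zero] at this
      norm_num at this
    rw [he' i0, he' i1, real_inner_smul_left, real_inner_smul_right,
      real_inner_self_eq_norm_sq, hw] at horth
    have := mul_ne_zero (hcne i0) (mul_ne_zero (hcne i1) (by norm_num : (1:ℝ)^2 ≠ 0))
    exact this horth
  obtain ⟨i0, hi0⟩ := hex
  have hlt : ∑ i, ⟪A (v i), v i⟫ < 0 := by
    have := Finset.sum_lt_sum hnonpos ⟨i0, Finset.mem_univ i0, hA _ hi0⟩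
    simpa using this
  linarith

lemma sum_inner_apply_inner (B : E →L[ℝ] E) (a : E) :
    ∑ i, ⟪a, B (stdOrthonormalBasis ℝ E i)⟫ * ⟪a, stdOrthonormalBasis ℝ E i⟫ = ⟪a, B a⟫ := by
  set e := stdOrthonormalBasis ℝ E
  have h1 : B a = ∑ i, ⟪a, e i⟫ • B (e i) := by
    conv_lhs => rw [← e.sum_repr' a]
    rw [map_sum]
    refine Finset.sum_congr rfl fun i _ => ?_
    rw [real_inner_comm, map_smul]
  rw [h1, inner_sum]
  refine Finset.sum_congr rfl fun i _ => ?_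
  rw [real_inner_smul_right]
  ring

lemma meanCurv_eq (f : E → ℝ) (hg : ContDiff ℝ 1 (gradient f)) (x : E)
    (hx : gradient f x ≠ 0) :
    meanCurv f x = ‖gradient f x‖⁻¹ *
      ((∑ i, ⟪fderiv ℝ (gradient f) x (stdOrthonormalBasis ℝ E i), stdOrthonormalBasis ℝ E i⟫)
        - (‖gradient f x‖^2)⁻¹ * ⟪gradient f x, fderiv ℝ (gradient f) x (gradient f x)⟫) := by
  set g := gradient f with hgdef
  set B := fderiv ℝ g x with hBdef
  set e := stdOrthonormalBasis ℝ E
  have hB : HasFDerivAt g B x := (hg.differentiable one_ne_zero x).hasFDerivAt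
  have hr : (0:ℝ) < ‖g x‖ := norm_pos_iff.mpr hx
  have hq : ‖g x‖^2 ≠ 0 := by positivity
  have hsqrtq : Real.sqrt (‖g x‖^2) = ‖g x‖ := Real.sqrt_sq (norm_nonneg _)
  have hnormsq : HasFDerivAt (fun y => ‖g y‖^2) (2 • (innerSL ℝ (g x)).comp B) x := hB.norm_sq
  have hsq : HasDerivAt Real.sqrt (1 / (2 * Real.sqrt (‖g x‖^2))) (‖g x‖^2) :=
    Real.hasDerivAt_sqrt hq
  have hinvd : HasDerivAt (fun t : ℝ => t⁻¹) (-(Real.sqrt (‖g x‖^2) ^ 2)⁻¹)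
      (Real.sqrt (‖g x‖^2)) := hasDerivAt_inv (by rw [hsqrtq]; exact hr.ne')
  have hcomp : HasDerivAt (fun t : ℝ => (Real.sqrt t)⁻¹)
      (-(Real.sqrt (‖g x‖^2) ^ 2)⁻¹ * (1 / (2 * Real.sqrt (‖g x‖^2)))) (‖g x‖^2) :=
    hinvd.comp _ hsq
  have hφ : HasFDerivAt (fun y => ‖g y‖⁻¹)
      ((-(Real.sqrt (‖g x‖^2) ^ 2)⁻¹ * (1 / (2 * Real.sqrt (‖g x‖^2)))) •
        (2 • (innerSL ℝ (g x)).comp B)) x := by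
    have h1 := hcomp.comp_hasFDerivAt x hnormsq
    have : (fun t : ℝ => (Real.sqrt t)⁻¹) ∘ (fun y => ‖g y‖^2) = fun y => ‖g y‖⁻¹ := by
      funext y
      simp [Function.comp, Real.sqrt_sq (norm_nonneg _)]
    rwa [this] at h1
  have hu : HasFDerivAt (fun y => ‖g y‖⁻¹ • g y)
      (‖g x‖⁻¹ • B + ((-(Real.sqrt (‖g x‖^2) ^ 2)⁻¹ * (1 / (2 * Real.sqrt (‖g x‖^2)))) •
        (2 • (innerSL ℝ (g x)).comp B)).smulRight (g x)) x := hφ.smul hB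
  have hD := hu.fderiv
  rw [meanCurv]
  have hfn : (fun y => ‖gradient f y‖⁻¹ • gradient f y) = (fun y => ‖g y‖⁻¹ • g y) := rfl
  rw [hfn]
  rw [hD]
  have hterm : ∀ i, ⟪(‖g x‖⁻¹ • B + ((-(Real.sqrt (‖g x‖^2) ^ 2)⁻¹ *
        (1 / (2 * Real.sqrt (‖g x‖^2)))) • (2 • (innerSL ℝ (g x)).comp B)).smulRight (g x)) (e i), e i⟫
      = ‖g x‖⁻¹ * ⟪B (e i), e i⟫
        - (‖g x‖^2)⁻¹ * ‖g x‖⁻¹ * (⟪g x, B (e i)⟫ * ⟪g x, e i⟫) := by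
    intro i
    rw [hsqrtq]
    simp only [ContinuousLinearMap.add_apply, ContinuousLinearMap.coe_smul', Pi.smul_apply,
      ContinuousLinearMap.smulRight_apply, ContinuousLinearMap.comp_apply,
      ContinuousLinearMap.smul_apply, innerSL_apply_apply, inner_add_left, real_inner_smul_left,
      smul_eq_mul]
    rw [nsmul_eq_mul]
    push_cast
    field_simp
    ring
  rw [Finset.sum_congr rfl fun i _ => hterm i, Finset.sum_sub_distrib, ← Finset.mul_sum,
    ← Finset.mul_sum, sum_inner_apply_inner]
  ring

end auxiliary

set_option maxHeartbeats 1000000 in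
/-- if `f : ℝⁿ → ℝ` is `C²` and `x₀` is a nondegenerate local
maximum (critical point with negative definite Hessian), then on a small
punctured ball around `x₀` the gradient is nonzero and the level hypersurfaces
of `f` have negative mean curvature with respect to the downstream normal
`-∇f/‖∇f‖`; consequently `f` is not strictly mean curvature convex, i.e. a
strictly mean curvature convex function has no nondegenerate local maxima. -/
theorem stmt6 {n : ℕ} (hn : 2 ≤ n) (f : EuclideanSpace ℝ (Fin n) → ℝ)
    (hf : ContDiff ℝ 2 f)
    (x₀ : EuclideanSpace ℝ (Fin n)) (hcrit : gradient f x₀ = 0)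
    (hneg : ∀ v : EuclideanSpace ℝ (Fin n), v ≠ 0 →
      iteratedFDeriv ℝ 2 f x₀ ![v, v] < 0) :
    (∃ δ > 0, ∀ x, dist x x₀ < δ → x ≠ x₀ →
        gradient f x ≠ 0 ∧ meanCurv f x < 0) ∧
    ¬ (∀ x, gradient f x ≠ 0 → 0 < meanCurv f x) := by
  have hdim : Module.finrank ℝ (EuclideanSpace ℝ (Fin n)) = n := finrank_euclideanSpace_fin
  have hdim2 : 2 ≤ Module.finrank ℝ (EuclideanSpace ℝ (Fin n)) := by omega
  haveI : Nontrivial (EuclideanSpace ℝ (Fin n)) := Module.nontrivial_of_finrank_pos (R := ℝ) (by omega)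
  set e := stdOrthonormalBasis ℝ (EuclideanSpace ℝ (Fin n)) with he
  set g := gradient f with hgdef
  have hg1 : ContDiff ℝ 1 g := grad_contDiff f hf
  set A := fderiv ℝ g x₀ with hAdef
  -- negative definiteness of A
  have hA : ∀ v : (EuclideanSpace ℝ (Fin n)), v ≠ 0 → ⟪A v, v⟫ < 0 := by
    intro v hv
    have h2 := hneg v hv
    rw [iteratedFDeriv_two_apply] at h2
    simp only [Matrix.cons_val_zero, Matrix.cons_val_one, Matrix.head_cons] at h2
    rw [hAdef, hgdef, inner_fderiv_grad f hf]
    exact h2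
  -- sphere is compact and nonempty
  have hsne : (Metric.sphere (0:(EuclideanSpace ℝ (Fin n))) 1).Nonempty := NormedSpace.sphere_nonempty.mpr zero_le_one
  -- lower bound K for ‖A h‖
  obtain ⟨w₁, hw₁s, hw₁min⟩ := (isCompact_sphere (0:(EuclideanSpace ℝ (Fin n))) 1).exists_isMinOn hsne
    (A.continuous.norm.continuousOn)
  have hw₁ : ‖w₁‖ = 1 := by simpa using hw₁s
  set K := ‖A w₁‖ with hKdef
  have hK : 0 < K := by
    rw [hKdef, norm_pos_iff]
    intro h0
    have hw₁ne : w₁ ≠ 0 := by intro h; rw [h, norm_zero] at hw₁; norm_num at hw₁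
    have := hA w₁ hw₁ne
    rw [h0, inner_zero_left] at this
    exact lt_irrefl 0 this
  have hKle : ∀ h : (EuclideanSpace ℝ (Fin n)), K * ‖h‖ ≤ ‖A h‖ := by
    intro h
    rcases eq_or_ne h 0 with rfl | hne
    · simp
    · have hhn : (0:ℝ) < ‖h‖ := norm_pos_iff.mpr hne
      have hmem : ‖h‖⁻¹ • h ∈ Metric.sphere (0:(EuclideanSpace ℝ (Fin n))) 1 := by
        simp [norm_smul, abs_of_pos (inv_pos.mpr hhn), inv_mul_cancel₀ hhn.ne']
      have := hw₁min hmem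
      simp only [Set.mem_setOf_eq, map_smul, norm_smul, norm_inv, norm_norm] at this
      calc K * ‖h‖ ≤ (‖h‖⁻¹ * ‖A h‖) * ‖h‖ := by
            apply mul_le_mul_of_nonneg_right _ (norm_nonneg h)
            simpa [abs_of_pos (inv_pos.mpr hhn)] using this
        _ = ‖A h‖ := by field_simp
  -- uniform negativity constant c on the sphere
  have hφcont : Continuous fun w : (EuclideanSpace ℝ (Fin n)) => (∑ i, ⟪A (e i), e i⟫) - ⟪A w, w⟫ :=
    continuous_const.sub (Continuous.inner (A.continuous) continuous_id)
  obtain ⟨w₀, hw₀s, hw₀max⟩ := (isCompact_sphere (0:(EuclideanSpace ℝ (Fin n))) 1).exists_isMaxOn hsne hφcont.continuousOn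
  have hw₀ : ‖w₀‖ = 1 := by simpa using hw₀s
  set c := -((∑ i, ⟪A (e i), e i⟫) - ⟪A w₀, w₀⟫) with hcdef
  have hc : 0 < c := by
    rw [hcdef, neg_pos]
    exact phi_neg hdim2 A hA w₀ hw₀
  set ε := c / (n + 1) with hεdef
  have hε : 0 < ε := by positivity
  -- eventual bounds near x₀
  have hBc : Continuous fun x => fderiv ℝ g x := hg1.continuous_fderiv one_ne_zero
  have h1 : ∀ᶠ x in nhds x₀, dist (fderiv ℝ g x) A < ε :=
    (Metric.tendsto_nhds.mp hBc.continuousAt) ε hε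
  have hder : HasFDerivAt g A x₀ := (hg1.differentiable one_ne_zero x₀).hasFDerivAt
  have h2 : ∀ᶠ x in nhds x₀, ‖g x - g x₀ - A (x - x₀)‖ ≤ K / 2 * ‖x - x₀‖ :=
    hder.isLittleO.def (half_pos hK)
  obtain ⟨δ, hδ, hball⟩ := Metric.eventually_nhds_iff.mp (h1.and h2)
  -- the main punctured-ball statement
  have main : ∀ x, dist x x₀ < δ → x ≠ x₀ → gradient f x ≠ 0 ∧ meanCurv f x < 0 := by
    intro x hx hxne
    obtain ⟨hx1, hx2⟩ := hball hx
    rw [hcrit, sub_zero] at hx2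
    have hxx₀ : (0:ℝ) < ‖x - x₀‖ := by
      rw [norm_pos_iff, sub_ne_zero]; exact hxne
    have hglb : K / 2 * ‖x - x₀‖ ≤ ‖g x‖ := by
      have ht : ‖A (x - x₀)‖ ≤ ‖g x‖ + ‖g x - A (x - x₀)‖ := by
        calc ‖A (x - x₀)‖ = ‖g x - (g x - A (x - x₀))‖ := by congr 1; abel
          _ ≤ ‖g x‖ + ‖g x - A (x - x₀)‖ := norm_sub_le _ _
      have := hKle (x - x₀)
      nlinarith [hx2]
    have hgpos : (0:ℝ) < ‖g x‖ := lt_of_lt_of_le (by positivity) hglb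
    have hgne : gradient f x ≠ 0 := by
      rw [← hgdef]; exact norm_pos_iff.mp hgpos
    refine ⟨hgne, ?_⟩
    rw [meanCurv_eq f hg1 x hgne]
    rw [← hgdef]
    set B := fderiv ℝ g x with hBdef
    set w : (EuclideanSpace ℝ (Fin n)) := ‖g x‖⁻¹ • g x with hwdef
    have hwn : ‖w‖ = 1 := by
      rw [hwdef, norm_smul, norm_inv, norm_norm, inv_mul_cancel₀ hgpos.ne']
    -- rewrite the quadratic term via the unit vector w
    have hquad : (‖g x‖^2)⁻¹ * ⟪g x, B (g x)⟫ = ⟪B w, w⟫ := by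
      rw [hwdef, map_smul, real_inner_smul_left, real_inner_smul_right, real_inner_comm]
      rw [sq, mul_inv]
      ring
    rw [hquad]
    -- compare B with A
    have hdist : ‖B - A‖ < ε := by rw [← dist_eq_norm]; exact hx1
    have hsplit : (∑ i, ⟪B (e i), e i⟫) - ⟪B w, w⟫ =
        ((∑ i, ⟪A (e i), e i⟫) - ⟪A w, w⟫)
          + ((∑ i, ⟪(B - A) (e i), e i⟫) - ⟪(B - A) w, w⟫) := by
      simp only [ContinuousLinearMap.sub_apply, inner_sub_left, Finset.sum_sub_distrib]
      ring
    have hbound1 : ∑ i, ⟪(B - A) (e i), e i⟫ ≤ (n : ℝ) * ‖B - A‖ := by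
      calc ∑ i, ⟪(B - A) (e i), e i⟫ ≤ ∑ _i : Fin (Module.finrank ℝ (EuclideanSpace ℝ (Fin n))), ‖B - A‖ := by
            apply Finset.sum_le_sum
            intro i _
            calc ⟪(B - A) (e i), e i⟫ ≤ ‖(B - A) (e i)‖ * ‖e i‖ := real_inner_le_norm _ _
              _ ≤ ‖B - A‖ * ‖e i‖ * ‖e i‖ := by
                  apply mul_le_mul_of_nonneg_right ((B - A).le_opNorm _) (norm_nonneg _)
              _ = ‖B - A‖ := by rw [e.orthonormal.1 i]; ring
        _ = (n : ℝ) * ‖B - A‖ := by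
            rw [Finset.sum_const, Finset.card_univ, Fintype.card_fin, hdim, nsmul_eq_mul]
    have hbound2 : -⟪(B - A) w, w⟫ ≤ ‖B - A‖ := by
      have := abs_real_inner_le_norm ((B - A) w) w
      have h2 : ‖(B - A) w‖ * ‖w‖ ≤ ‖B - A‖ := by
        rw [hwn, mul_one]
        simpa [hwn] using (B - A).le_opNorm w
      have := abs_le.mp (le_trans (abs_real_inner_le_norm ((B - A) w) w) h2)
      linarith [this.1]
    have hmax := hw₀max (by simpa using hwn : w ∈ Metric.sphere (0:(EuclideanSpace ℝ (Fin n))) 1)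
    simp only [Set.mem_setOf_eq] at hmax
    have hΦ : (∑ i, ⟪B (e i), e i⟫) - ⟪B w, w⟫ < 0 := by
      rw [hsplit]
      have hA0 : (∑ i, ⟪A (e i), e i⟫) - ⟪A w, w⟫ ≤ -c := by
        rw [hcdef]; linarith [hmax]
      have : (n : ℝ) * ‖B - A‖ + ‖B - A‖ < c := by
        have hn1 : (0:ℝ) < (n:ℝ) + 1 := by positivity
        have : ((n:ℝ) + 1) * ‖B - A‖ < ((n:ℝ) + 1) * ε := by
          apply mul_lt_mul_of_pos_left hdist hn1
        rw [hεdef] at this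
        rw [mul_div_cancel₀ c hn1.ne'] at this
        linarith
      linarith
    exact mul_neg_of_pos_of_neg (inv_pos.mpr hgpos) hΦ
  refine ⟨⟨δ, hδ, main⟩, ?_⟩
  intro hpos
  set v0 := e ⟨0, by omega⟩ with hv0def
  have hv0 : ‖v0‖ = 1 := e.orthonormal.1 _
  have hv0ne : (δ/2) • v0 ≠ 0 := by
    intro h
    have hh := congrArg norm h
    rw [norm_smul, hv0, mul_one, norm_zero, Real.norm_eq_abs,
      abs_of_pos (by linarith : (0:ℝ) < δ/2)] at hh
    linarith
  set x := x₀ + (δ/2) • v0 with hxdef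
  have h' : x - x₀ = (δ/2) • v0 := by rw [hxdef, add_sub_cancel_left]
  have hne : x ≠ x₀ := by
    intro h
    rw [h, sub_self] at h'
    exact hv0ne h'.symm
  have hdist : dist x x₀ < δ := by
    rw [dist_eq_norm, h', norm_smul, hv0, mul_one, Real.norm_eq_abs,
      abs_of_pos (by linarith : (0:ℝ) < δ/2)]
    linarith
  obtain ⟨hgne, hmc⟩ := main x hdist hne
  exact absurd (hpos x hgne) (not_lt.mpr hmc.le)
end
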